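/- arXiv:1310.1353 — 3 statements merged into one kernel-verified Lean document; each statement's English description precedes it below -/
import Mathlib

section
/- Let D = ∏_n M_{k(n)}(ℂ), let 𝒥 be an ideal on ℕ, and let D^𝒥 = ⊕_𝒥 M_{k(n)}(ℂ). Then the center of the quotient C*-algebra D/D^𝒥 equals the image of the center Z(D) under the quotient map; that is, Z(D/D^𝒥) ≅ Z(D)/(D^𝒥 ∩ Z(D)). -/
open scoped ENNReal Matrix.Norms.L2Operator

noncomputable instance (k : ℕ) : NormedStarGroup (Matrix (Fin k) (Fin k) ℂ) :=
  CStarRing.to_normedStarGroup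

namespace CQL

open Matrix

variable {k : ℕ}

lemma opNorm_le_bound' (A : Matrix (Fin k) (Fin k) ℂ) {c : ℝ} (hc : 0 ≤ c)
    (h : ∀ x : EuclideanSpace ℂ (Fin k),
      ‖(WithLp.equiv 2 (Fin k → ℂ)).symm (A *ᵥ (WithLp.equiv 2 (Fin k → ℂ)) x)‖ ≤ c * ‖x‖) :
    ‖A‖ ≤ c := by
  rw [Matrix.l2_opNorm_def]
  exact ContinuousLinearMap.opNorm_le_bound _ hc h

lemma norm_diagonal_le {d : Fin k → ℂ} {c : ℝ} (hc : 0 ≤ c) (h : ∀ i, ‖d i‖ ≤ c) :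
    ‖diagonal d‖ ≤ c := by
  apply opNorm_le_bound' _ hc
  intro x
  rw [EuclideanSpace.norm_eq, EuclideanSpace.norm_eq]
  have h1 : ∀ i : Fin k,
      ‖((WithLp.equiv 2 (Fin k → ℂ)).symm (diagonal d *ᵥ (WithLp.equiv 2 (Fin k → ℂ)) x) :
        EuclideanSpace ℂ (Fin k)) i‖ ^ 2 ≤ c ^ 2 * ‖x i‖ ^ 2 := by
    intro i
    have : ((WithLp.equiv 2 (Fin k → ℂ)).symm (diagonal d *ᵥ (WithLp.equiv 2 (Fin k → ℂ)) x) :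
        EuclideanSpace ℂ (Fin k)) i = d i * x i := by
      simp [mulVec_diagonal]
    rw [this, norm_mul, mul_pow]
    exact mul_le_mul_of_nonneg_right (pow_le_pow_left₀ (norm_nonneg _) (h i) 2) (sq_nonneg _)
  calc √(∑ i, ‖((WithLp.equiv 2 (Fin k → ℂ)).symm (diagonal d *ᵥ (WithLp.equiv 2 (Fin k → ℂ)) x) :
        EuclideanSpace ℂ (Fin k)) i‖ ^ 2)
      ≤ √(∑ i, c ^ 2 * ‖x i‖ ^ 2) := Real.sqrt_le_sqrt (Finset.sum_le_sum fun i _ => h1 i)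
    _ = c * √(∑ i, ‖x i‖ ^ 2) := by
        rw [← Finset.mul_sum, Real.sqrt_mul (sq_nonneg c), Real.sqrt_sq hc]

lemma vecMulVec_mulVec' (v u x : Fin k → ℂ) :
    vecMulVec v u *ᵥ x = (u ⬝ᵥ x) • v := by
  ext i
  simp [Matrix.mulVec, dotProduct, vecMulVec_apply, Finset.mul_sum, Finset.sum_mul,
    mul_comm, mul_assoc, mul_left_comm]

example [NeZero k] : Nontrivial (Matrix (Fin k) (Fin k) ℂ) := inferInstance

end CQL

namespace CQL2
open Matrix CQL

variable {k : ℕ}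

lemma eigen_abs_le [NeZero k] {H : Matrix (Fin k) (Fin k) ℂ} (hH : H.IsHermitian) (j : Fin k) :
    |hH.eigenvalues j| ≤ ‖H‖ := by
  have hx : ‖hH.eigenvectorBasis j‖ = 1 := hH.eigenvectorBasis.orthonormal.1 j
  have h1 := Matrix.l2_opNorm_mulVec H (hH.eigenvectorBasis j)
  erw [hH.mulVec_eigenvectorBasis j] at h1
  have h2 : ((EuclideanSpace.equiv (Fin k) ℂ).symm (hH.eigenvalues j • ⇑(hH.eigenvectorBasis j)) :
      EuclideanSpace ℂ (Fin k)) = hH.eigenvalues j • hH.eigenvectorBasis j := rfl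
  rw [h2, norm_smul, hx, Real.norm_eq_abs, mul_one] at h1
  simpa [hx] using h1

lemma dist_scalar_le [NeZero k] {H : Matrix (Fin k) (Fin k) ℂ} (hH : H.IsHermitian)
    {m r : ℝ} (hr : 0 ≤ r) (hev : ∀ i, |hH.eigenvalues i - m| ≤ r) :
    ‖H - (m : ℂ) • 1‖ ≤ r := by
  have hU : (hH.eigenvectorUnitary : Matrix (Fin k) (Fin k) ℂ) ∈
      unitary (Matrix (Fin k) (Fin k) ℂ) := hH.eigenvectorUnitary.2
  set U : Matrix (Fin k) (Fin k) ℂ := (hH.eigenvectorUnitary : Matrix (Fin k) (Fin k) ℂ) with hUdef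
  have h1 : H - (m : ℂ) • 1 =
      U * (diagonal fun i => (hH.eigenvalues i : ℂ) - m) * star U := by
    have hid : (m : ℂ) • (1 : Matrix (Fin k) (Fin k) ℂ) = U * ((m : ℂ) • 1) * star U := by
      rw [mul_smul_comm, mul_one, smul_mul_assoc, Unitary.mul_star_self_of_mem hU]
    conv_lhs => rw [hH.spectral_theorem, Unitary.conjStarAlgAut_apply, hid]
    rw [← sub_mul, ← mul_sub]
    congr 2
    rw [smul_one_eq_diagonal, diagonal_sub]
    rfl
  rw [h1, CStarRing.norm_mul_mem_unitary _ (Unitary.star_mem hU),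
    CStarRing.norm_mem_unitary_mul _ hU]
  refine norm_diagonal_le hr fun i => ?_
  rw [show ((hH.eigenvalues i : ℂ) - m) = ((hH.eigenvalues i - m : ℝ) : ℂ) by push_cast; ring,
    Complex.norm_real, Real.norm_eq_abs]
  exact hev i

lemma mul_vecMulVec (A : Matrix (Fin k) (Fin k) ℂ) (v u : Fin k → ℂ) :
    A * vecMulVec v u = vecMulVec (A *ᵥ v) u := by
  ext i j
  simp [Matrix.mul_apply, vecMulVec_apply, Matrix.mulVec, dotProduct, Finset.sum_mul, mul_assoc]

lemma vecMulVec_mul (A : Matrix (Fin k) (Fin k) ℂ) (v u : Fin k → ℂ) :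
    vecMulVec v u * A = vecMulVec v (u ᵥ* A) := by
  ext i j
  simp [Matrix.mul_apply, vecMulVec_apply, Matrix.vecMul, dotProduct, Finset.mul_sum, mul_assoc]

lemma smul_vecMulVec (c : ℂ) (v u : Fin k → ℂ) :
    vecMulVec (c • v) u = c • vecMulVec v u := by
  ext i j
  simp [vecMulVec_apply, mul_assoc]

lemma vecMulVec_smul (c : ℂ) (v u : Fin k → ℂ) :
    vecMulVec v (c • u) = c • vecMulVec v u := by
  ext i j
  simp [vecMulVec_apply, mul_assoc, mul_left_comm]

lemma hermitian_commutator [NeZero k] {H : Matrix (Fin k) (Fin k) ℂ} (hH : H.IsHermitian)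
    (i0 j0 : Fin k) :
    ∃ b : Matrix (Fin k) (Fin k) ℂ, ‖b‖ ≤ 1 ∧ 1 ≤ ‖b‖ ∧
      H * b - b * H = ((hH.eigenvalues i0 - hH.eigenvalues j0 : ℝ) : ℂ) • b := by
  classical
  set v : Fin k → ℂ := ⇑(hH.eigenvectorBasis i0) with hv
  set w : Fin k → ℂ := ⇑(hH.eigenvectorBasis j0) with hw
  set b := vecMulVec v (star w) with hb
  have hnv : ‖hH.eigenvectorBasis i0‖ = 1 := hH.eigenvectorBasis.orthonormal.1 i0
  have hnw : ‖hH.eigenvectorBasis j0‖ = 1 := hH.eigenvectorBasis.orthonormal.1 j0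
  have hmulv : H *ᵥ v = ((hH.eigenvalues i0 : ℂ)) • v := by
    have h := hH.mulVec_eigenvectorBasis i0
    erw [h]
    funext i
    simp [Complex.real_smul, hv]
  have hmulw : H *ᵥ w = ((hH.eigenvalues j0 : ℂ)) • w := by
    have h := hH.mulVec_eigenvectorBasis j0
    erw [h]
    funext i
    simp [Complex.real_smul, hw]
  have hHb : H * b = (hH.eigenvalues i0 : ℂ) • b := by
    rw [hb, mul_vecMulVec, hmulv, smul_vecMulVec]
  have hbH : b * H = (hH.eigenvalues j0 : ℂ) • b := by
    have hsw : star w ᵥ* H = (hH.eigenvalues j0 : ℂ) • star w := by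
      have h4 : star (H *ᵥ w) = star w ᵥ* Hᴴ := star_mulVec H w
      rw [hH.eq] at h4
      rw [← h4, hmulw, star_smul]
      congr 1
      simp [Complex.star_def, Complex.conj_ofReal]
    rw [hb, vecMulVec_mul, hsw, vecMulVec_smul]
  have hcomm : H * b - b * H = ((hH.eigenvalues i0 - hH.eigenvalues j0 : ℝ) : ℂ) • b := by
    rw [hHb, hbH, ← sub_smul]
    norm_cast
  refine ⟨b, ?_, ?_, hcomm⟩
  · refine opNorm_le_bound' _ zero_le_one fun x => ?_
    have hbx : b *ᵥ (WithLp.equiv 2 (Fin k → ℂ)) x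
        = ((star w) ⬝ᵥ (WithLp.equiv 2 (Fin k → ℂ)) x) • v := vecMulVec_mulVec' _ _ _
    have hinner : (star w) ⬝ᵥ ((WithLp.equiv 2 (Fin k → ℂ)) x)
        = (inner ℂ (hH.eigenvectorBasis j0) x : ℂ) := dotProduct_comm _ _
    rw [hbx]
    have : ((WithLp.equiv 2 (Fin k → ℂ)).symm ((star w ⬝ᵥ (WithLp.equiv 2 (Fin k → ℂ)) x) • v) :
        EuclideanSpace ℂ (Fin k))
        = (star w ⬝ᵥ (WithLp.equiv 2 (Fin k → ℂ)) x) • hH.eigenvectorBasis i0 := rfl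
    rw [this, norm_smul, hnv, mul_one, hinner, one_mul]
    calc ‖(inner ℂ (hH.eigenvectorBasis j0) x : ℂ)‖
        ≤ ‖hH.eigenvectorBasis j0‖ * ‖x‖ := norm_inner_le_norm _ _
      _ = ‖x‖ := by rw [hnw, one_mul]
  · have h2 := Matrix.l2_opNorm_mulVec b (hH.eigenvectorBasis j0)
    have hbw : b *ᵥ w = v := by
      rw [hb, vecMulVec_mulVec']
      have : (star w) ⬝ᵥ w = (inner ℂ (hH.eigenvectorBasis j0) (hH.eigenvectorBasis j0) : ℂ) := dotProduct_comm _ _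
      rw [this, inner_self_eq_norm_sq_to_K, hnw]
      norm_num
    have h3 : ‖(EuclideanSpace.equiv (Fin k) ℂ).symm (b *ᵥ hH.eigenvectorBasis j0)‖ = 1 := by
      erw [hbw]
      exact hnv
    rw [h3, hnw, mul_one] at h2
    exact h2

lemma hermitian_key [NeZero k] {H : Matrix (Fin k) (Fin k) ℂ} (hH : H.IsHermitian) :
    ∃ m : ℝ, |m| ≤ ‖H‖ ∧ ∀ ε : ℝ, ε ≤ 2 * ‖H - (m : ℂ) • 1‖ →
      ∃ b : Matrix (Fin k) (Fin k) ℂ, ‖b‖ ≤ 1 ∧ ε ≤ ‖H * b - b * H‖ := by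
  obtain ⟨i0, hi0⟩ := Finite.exists_max hH.eigenvalues
  obtain ⟨j0, hj0⟩ := Finite.exists_min hH.eigenvalues
  set lmax := hH.eigenvalues i0 with hlmax
  set lmin := hH.eigenvalues j0 with hlmin
  have hminmax : lmin ≤ lmax := hj0 i0
  refine ⟨(lmax + lmin) / 2, ?_, ?_⟩
  · have h1 := abs_le.mp (eigen_abs_le hH i0)
    have h2 := abs_le.mp (eigen_abs_le hH j0)
    rw [abs_le]
    constructor <;> [skip; skip] <;> rw [← hlmax] at h1 <;> rw [← hlmin] at h2
    · linarith [h1.1, h2.1]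
    · linarith [h1.2, h2.2]
  · intro ε hε
    have hd : ‖H - (((lmax + lmin) / 2 : ℝ) : ℂ) • (1 : Matrix (Fin k) (Fin k) ℂ)‖
        ≤ (lmax - lmin) / 2 := by
      refine dist_scalar_le hH (by linarith) fun i => abs_le.mpr ⟨?_, ?_⟩
      · linarith [hj0 i]
      · linarith [hi0 i]
    obtain ⟨b, hb1, hb2, hb3⟩ := hermitian_commutator hH i0 j0
    refine ⟨b, hb1, ?_⟩
    rw [hb3, norm_smul, Complex.norm_real, Real.norm_eq_abs,
      abs_of_nonneg (by linarith : (0:ℝ) ≤ lmax - lmin)]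
    nlinarith

lemma key [NeZero k] (a : Matrix (Fin k) (Fin k) ℂ) :
    ∃ c : ℂ, ‖c‖ ≤ 2 * ‖a‖ ∧ ∀ ε : ℝ, ε ≤ ‖a - c • 1‖ →
      ∃ b : Matrix (Fin k) (Fin k) ℂ, ‖b‖ ≤ 1 ∧ ε ≤ ‖a * b - b * a‖ := by
  set h : Matrix (Fin k) (Fin k) ℂ := (2⁻¹ : ℂ) • (a + aᴴ) with hh_def
  set g : Matrix (Fin k) (Fin k) ℂ := (-(Complex.I) / 2) • (a - aᴴ) with hg_def
  have hh : h.IsHermitian := by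
    show hᴴ = h
    rw [hh_def, conjTranspose_smul, conjTranspose_add, conjTranspose_conjTranspose,
      show star (2⁻¹ : ℂ) = (2⁻¹ : ℂ) by simp, add_comm]
  have hg : g.IsHermitian := by
    show gᴴ = g
    rw [hg_def, conjTranspose_smul, conjTranspose_sub, conjTranspose_conjTranspose,
      show star (-(Complex.I) / 2) = Complex.I / 2 by
        simp [Complex.star_def, map_div₀, Complex.conj_I],
      show (aᴴ - a) = -(a - aᴴ) from (neg_sub _ _).symm, smul_neg, ← neg_smul, neg_div]
  have hdecomp : a = h + Complex.I • g := by
    rw [hh_def, hg_def, smul_smul,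
      show Complex.I * (-(Complex.I) / 2) = (2⁻¹ : ℂ) by
        rw [← mul_div_assoc, mul_neg, Complex.I_mul_I, neg_neg]; norm_num,
      ← smul_add, show a + aᴴ + (a - aᴴ) = (2 : ℂ) • a by
        rw [two_smul]; abel,
      smul_smul]
    norm_num
  have hnh : ‖h‖ ≤ ‖a‖ := by
    rw [hh_def, norm_smul]
    calc ‖(2⁻¹ : ℂ)‖ * ‖a + aᴴ‖ ≤ 2⁻¹ * (‖a‖ + ‖aᴴ‖) := by
          rw [show ‖(2⁻¹ : ℂ)‖ = 2⁻¹ by simp]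
          gcongr
          exact norm_add_le _ _
      _ = ‖a‖ := by rw [Matrix.l2_opNorm_conjTranspose]; ring
  have hng : ‖g‖ ≤ ‖a‖ := by
    rw [hg_def, norm_smul]
    calc ‖(-(Complex.I) / 2)‖ * ‖a - aᴴ‖ ≤ 2⁻¹ * (‖a‖ + ‖aᴴ‖) := by
          rw [show ‖(-(Complex.I) / 2 : ℂ)‖ = 2⁻¹ by simp [norm_div]]
          gcongr
          exact norm_sub_le _ _
      _ = ‖a‖ := by rw [Matrix.l2_opNorm_conjTranspose]; ring
  obtain ⟨mh, hmh, Hh⟩ := hermitian_key hh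
  obtain ⟨mg, hmg, Hg⟩ := hermitian_key hg
  refine ⟨(mh : ℂ) + Complex.I * mg, ?_, ?_⟩
  · calc ‖(mh : ℂ) + Complex.I * mg‖ ≤ ‖(mh : ℂ)‖ + ‖Complex.I * (mg : ℂ)‖ := norm_add_le _ _
      _ = |mh| + |mg| := by simp [Complex.norm_real]
      _ ≤ ‖h‖ + ‖g‖ := add_le_add hmh hmg
      _ ≤ 2 * ‖a‖ := by linarith
  · intro ε hε
    -- the norm equality for conj-transposed commutators
    have hconj : ∀ b : Matrix (Fin k) (Fin k) ℂ, ‖aᴴ * b - b * aᴴ‖ = ‖a * bᴴ - bᴴ * a‖ := by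
      intro b
      have : aᴴ * b - b * aᴴ = -((a * bᴴ - bᴴ * a)ᴴ) := by
        rw [conjTranspose_sub, conjTranspose_mul, conjTranspose_mul,
          conjTranspose_conjTranspose]
        abel
      rw [this, norm_neg, Matrix.l2_opNorm_conjTranspose]
    have hfin : ∀ b : Matrix (Fin k) (Fin k) ℂ, ‖b‖ ≤ 1 →
        ε ≤ 2⁻¹ * (‖a * b - b * a‖ + ‖a * bᴴ - bᴴ * a‖) →
        ∃ b' : Matrix (Fin k) (Fin k) ℂ, ‖b'‖ ≤ 1 ∧ ε ≤ ‖a * b' - b' * a‖ := by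
      intro b hb hbe
      by_cases hcase : ε ≤ ‖a * b - b * a‖
      · exact ⟨b, hb, hcase⟩
      · refine ⟨bᴴ, ?_, ?_⟩
        · rw [Matrix.l2_opNorm_conjTranspose]; exact hb
        · push_neg at hcase; linarith
    have hsplit : ε ≤ ‖h - (mh : ℂ) • 1‖ + ‖g - (mg : ℂ) • 1‖ := by
      have hdc : a - ((mh : ℂ) + Complex.I * mg) • 1
          = (h - (mh : ℂ) • 1) + Complex.I • (g - (mg : ℂ) • 1) := by
        rw [add_smul, mul_smul, smul_sub]
        conv_lhs => rw [hdecomp]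
        abel
      calc ε ≤ ‖a - ((mh : ℂ) + Complex.I * mg) • 1‖ := hε
        _ ≤ ‖h - (mh : ℂ) • 1‖ + ‖Complex.I • (g - (mg : ℂ) • 1)‖ := by
            rw [hdc]; exact norm_add_le _ _
        _ = ‖h - (mh : ℂ) • 1‖ + ‖g - (mg : ℂ) • 1‖ := by
            rw [norm_smul, Complex.norm_I, one_mul]
    by_cases hcs : ε ≤ 2 * ‖h - (mh : ℂ) • 1‖
    · obtain ⟨b, hb1, hb2⟩ := Hh ε hcs
      refine hfin b hb1 ?_
      have hcm : h * b - b * h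
          = (2⁻¹ : ℂ) • ((a * b - b * a) + (aᴴ * b - b * aᴴ)) := by
        rw [hh_def, smul_mul_assoc, mul_smul_comm, ← smul_sub]
        congr 1
        noncomm_ring
      have : ‖h * b - b * h‖ ≤ 2⁻¹ * (‖a * b - b * a‖ + ‖aᴴ * b - b * aᴴ‖) := by
        rw [hcm, norm_smul, show ‖(2⁻¹ : ℂ)‖ = 2⁻¹ by simp]
        gcongr
        exact norm_add_le _ _
      rw [hconj b] at this
      linarith
    · have hcs2 : ε ≤ 2 * ‖g - (mg : ℂ) • 1‖ := by push_neg at hcs; linarith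
      obtain ⟨b, hb1, hb2⟩ := Hg ε hcs2
      refine hfin b hb1 ?_
      have hcm : g * b - b * g
          = (-(Complex.I) / 2) • ((a * b - b * a) - (aᴴ * b - b * aᴴ)) := by
        rw [hg_def, smul_mul_assoc, mul_smul_comm, ← smul_sub]
        congr 1
        noncomm_ring
      have : ‖g * b - b * g‖ ≤ 2⁻¹ * (‖a * b - b * a‖ + ‖aᴴ * b - b * aᴴ‖) := by
        rw [hcm, norm_smul, show ‖(-(Complex.I) / 2 : ℂ)‖ = 2⁻¹ by simp [norm_div]]
        gcongr
        exact norm_sub_le _ _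
      rw [hconj b] at this
      linarith

end CQL2

/-- For `D = ∏_n M_{k(n)}(ℂ)` and the closed ideal `D^𝒥` associated with an
ideal `𝒥` on `ℕ`, the center of `D/D^𝒥` is the image of `Z(D)` under the quotient map:
an element of `D` is central modulo `D^𝒥` iff it differs from a central element of `D`
by an element of `D^𝒥`. -/
theorem center_of_quotient_lifts (k : ℕ → ℕ) [∀ n, NeZero (k n)]
    (J : Set (Set ℕ))
    (hJdown : ∀ X Y : Set ℕ, X ⊆ Y → Y ∈ J → X ∈ J)
    (hJunion : ∀ X ∈ J, ∀ Y ∈ J, X ∪ Y ∈ J)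
    (hJempty : (∅ : Set ℕ) ∈ J) :
    {a : lp (fun n => Matrix (Fin (k n)) (Fin (k n)) ℂ) ∞ |
        ∀ b : lp (fun n => Matrix (Fin (k n)) (Fin (k n)) ℂ) ∞,
          ∀ ε : ℝ, 0 < ε → {n : ℕ | ε ≤ ‖(a * b - b * a) n‖} ∈ J} =
      {a : lp (fun n => Matrix (Fin (k n)) (Fin (k n)) ℂ) ∞ |
        ∃ c ∈ Set.center (lp (fun n => Matrix (Fin (k n)) (Fin (k n)) ℂ) ∞),
          ∀ ε : ℝ, 0 < ε → {n : ℕ | ε ≤ ‖(a - c) n‖} ∈ J} := by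

  classical
  have coord_mul_sub : ∀ (x y : lp (fun n => Matrix (Fin (k n)) (Fin (k n)) ℂ) ∞) (n : ℕ),
      (x * y - y * x) n = x n * y n - y n * x n := by
    intro x y n
    simp [lp.coeFn_sub, Pi.sub_apply, lp.infty_coeFn_mul, Pi.mul_apply]
    rfl
  ext a
  simp only [Set.mem_setOf_eq]
  constructor
  · intro hL
    choose lam hlam1 hlam2 using fun n => CQL2.key (a n)
    have hmem : Memℓp (fun n => lam n • (1 : Matrix (Fin (k n)) (Fin (k n)) ℂ)) ∞ := by
      apply memℓp_infty
      refine ⟨2 * ‖a‖, ?_⟩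
      rintro x ⟨n, rfl⟩
      calc ‖lam n • (1 : Matrix (Fin (k n)) (Fin (k n)) ℂ)‖ = ‖lam n‖ := by
            rw [norm_smul, CStarRing.norm_one, mul_one]
        _ ≤ 2 * ‖a n‖ := hlam1 n
        _ ≤ 2 * ‖a‖ := by
            have := lp.norm_apply_le_norm (E := fun n => Matrix (Fin (k n)) (Fin (k n)) ℂ)
              (by norm_num : (∞ : ℝ≥0∞) ≠ 0) a n
            linarith
    set c : lp (fun n => Matrix (Fin (k n)) (Fin (k n)) ℂ) ∞ := ⟨_, hmem⟩ with hc_def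
    have hcn : ∀ n, c n = lam n • (1 : Matrix (Fin (k n)) (Fin (k n)) ℂ) := fun n => rfl
    refine ⟨c, ?_, ?_⟩
    · rw [Semigroup.mem_center_iff]
      intro b
      apply lp.ext
      rw [lp.infty_coeFn_mul, lp.infty_coeFn_mul]
      funext n
      show b n * c n = c n * b n
      rw [hcn n, Matrix.mul_smul, Matrix.smul_mul, mul_one, one_mul]
    · intro ε hε
      have hXsub : ∀ n ∈ {n : ℕ | ε ≤ ‖(a - c) n‖},
          ∃ b : Matrix (Fin (k n)) (Fin (k n)) ℂ, ‖b‖ ≤ 1 ∧ ε ≤ ‖a n * b - b * a n‖ := by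
        intro n hn
        apply hlam2 n ε
        have h1 : (a - c) n = a n - lam n • 1 := by
          rw [lp.coeFn_sub, Pi.sub_apply, hcn n]
        have hn' : ε ≤ ‖(a - c) n‖ := hn
        rw [h1] at hn'
        exact hn'
      choose bfun hb1 hb2 using hXsub
      have hbmem : Memℓp (fun n => if hn : n ∈ {n : ℕ | ε ≤ ‖(a - c) n‖}
          then bfun n hn else 0) ∞ := by
        apply memℓp_infty
        refine ⟨1, ?_⟩
        rintro x ⟨n, rfl⟩
        dsimp only
        split
        · next hn => exact hb1 n hn
        · simp
      set b : lp (fun n => Matrix (Fin (k n)) (Fin (k n)) ℂ) ∞ := ⟨_, hbmem⟩ with hb_def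
      refine hJdown _ _ ?_ (hL b ε hε)
      intro n hn
      show ε ≤ ‖(a * b - b * a) n‖
      rw [coord_mul_sub a b n]
      have hbn : b n = bfun n hn := by
        show (if hn' : n ∈ {n : ℕ | ε ≤ ‖(a - c) n‖} then bfun n hn' else 0) = bfun n hn
        rw [dif_pos hn]
      rw [hbn]
      exact hb2 n hn
  · rintro ⟨c, hcc, hcJ⟩ b ε hε
    have hcomm := Semigroup.mem_center_iff.mp hcc
    have heq : a * b - b * a = (a - c) * b - b * (a - c) := by
      rw [sub_mul, mul_sub, ← hcomm b]
      abel
    set δ : ℝ := ε / (2 * ‖b‖ + 1) with hδ_def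
    have hbnn : (0 : ℝ) ≤ ‖b‖ := norm_nonneg b
    have hδ : 0 < δ := div_pos hε (by linarith)
    refine hJdown _ _ ?_ (hcJ δ hδ)
    intro n hn
    have hn' : ε ≤ ‖(a * b - b * a) n‖ := hn
    show δ ≤ ‖(a - c) n‖
    have h1 : (a * b - b * a) n = (a - c) n * b n - b n * (a - c) n := by
      rw [heq]
      exact coord_mul_sub (a - c) b n
    have hbn : ‖b n‖ ≤ ‖b‖ := lp.norm_apply_le_norm (by norm_num : (∞ : ℝ≥0∞) ≠ 0) b n
    have hacn : (0 : ℝ) ≤ ‖(a - c) n‖ := norm_nonneg _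
    have h2 : ‖(a * b - b * a) n‖ ≤ 2 * ‖b‖ * ‖(a - c) n‖ := by
      rw [h1]
      calc ‖(a - c) n * b n - b n * (a - c) n‖
          ≤ ‖(a - c) n * b n‖ + ‖b n * (a - c) n‖ := norm_sub_le _ _
        _ ≤ ‖(a - c) n‖ * ‖b n‖ + ‖b n‖ * ‖(a - c) n‖ :=
            add_le_add (norm_mul_le _ _) (norm_mul_le _ _)
        _ ≤ 2 * ‖b‖ * ‖(a - c) n‖ := by nlinarith
    rw [hδ_def, div_le_iff₀ (by linarith : (0:ℝ) < 2 * ‖b‖ + 1)]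
    nlinarith
end

section
/- Let 𝒥 be a Borel ideal on ℕ containing all finite sets, let D = ∏_n M_{k(n)}(ℂ) and D^𝒥 the associated closed ideal, and let ℒ be a non-meager ideal on ℕ. If a ∈ D \ D^𝒥 then there exists M ∈ ℒ such that P_M a ∉ D^𝒥, where P_M a denotes the sequence (a_n) restricted to coordinates in M (zero elsewhere). -/
open scoped Classical ENNReal Matrix.Norms.L2Operator

/-- The characteristic-function embedding of `𝒫(ℕ)` into `2^ℕ`. -/
noncomputable def charFun (A : Set ℕ) : ℕ → Bool := fun n => decide (n ∈ A)

namespace TalagrandAux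

open Topology Filter Set

/-- Inverse of `charFun`. -/
def toSet (x : ℕ → Bool) : Set ℕ := {n | x n = true}

lemma charFun_toSet (x : ℕ → Bool) : charFun (toSet x) = x := by
  funext n
  simp [charFun, toSet]
  by_cases h : x n = true <;> simp [h]

lemma toSet_charFun (X : Set ℕ) : toSet (charFun X) = X := by
  ext n
  simp [charFun, toSet]

lemma charFun_image (K : Set (Set ℕ)) : charFun '' K = {x | toSet x ∈ K} := by
  ext x
  constructor
  · rintro ⟨X, hX, rfl⟩
    simpa [toSet_charFun] using hX
  · intro hx
    exact ⟨toSet x, hx, charFun_toSet x⟩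

/-- A proper ideal on `ℕ` containing all finite sets whose image in `2^ℕ` has the
Baire property is meager (Jalali-Naini–Talagrand). -/
theorem meagre_of_ideal (K : Set (Set ℕ))
    (hdown : ∀ X Y : Set ℕ, X ⊆ Y → Y ∈ K → X ∈ K)
    (hun : ∀ X ∈ K, ∀ Y ∈ K, X ∪ Y ∈ K)
    (hfin : ∀ X : Set ℕ, X.Finite → X ∈ K)
    (hproper : (Set.univ : Set ℕ) ∉ K)
    (hBM : BaireMeasurableSet (charFun '' K)) :
    IsMeagre (charFun '' K) := by
  set S := charFun '' K with hS
  by_contra hnm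
  obtain ⟨u, huo, hsu⟩ := hBM.residualEq_isOpen
  -- u is nonempty
  rcases u.eq_empty_or_nonempty with rfl | ⟨x₀, hx₀⟩
  · apply hnm
    rw [IsMeagre]
    filter_upwards [hsu] with x hx
    intro hxS
    rw [eq_iff_iff] at hx
    exact Set.notMem_empty x (hx.mp hxS)
  -- find a basic cylinder inside u
  obtain ⟨I, v, hv, hvu⟩ := isOpen_pi_iff.mp huo x₀ hx₀
  set C : Set (ℕ → Bool) := (I : Set ℕ).pi (fun n => {x₀ n}) with hC
  have hCopen : IsOpen C := isOpen_set_pi I.finite_toSet (fun n _ => isOpen_discrete _)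
  have hCx₀ : x₀ ∈ C := fun n _ => rfl
  have hCu : C ⊆ u := by
    intro x hx
    apply hvu
    intro n hn
    have : x n = x₀ n := hx n hn
    rw [this]
    exact (hv n hn).2
  -- the flipping homeomorphism
  set g : (ℕ → Bool) → (ℕ → Bool) := fun x n => if n ∈ I then x n else !(x n) with hg
  have hginv : Function.Involutive g := by
    intro x
    funext n
    by_cases h : n ∈ I <;> simp [hg, h]
  have hgcont : Continuous g := by
    apply continuous_pi
    intro n
    exact Continuous.comp (continuous_of_discreteTopology
      (f := fun b : Bool => if n ∈ I then b else !b)) (continuous_apply n)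
  let e : (ℕ → Bool) ≃ₜ (ℕ → Bool) :=
    ⟨hginv.toPerm, hgcont, hgcont⟩
  -- the meager error set
  set T₁ : Set (ℕ → Bool) := {x | ¬ ((x ∈ S) = (x ∈ u))} with hT₁
  have hT₁m : IsMeagre T₁ := by
    rw [IsMeagre]
    filter_upwards [hsu] with x hx
    simp only [hT₁, Set.mem_compl_iff, Set.mem_setOf_eq, not_not]
    exact hx
  have hT₂m : IsMeagre (g ⁻¹' T₁) :=
    hT₁m.preimage_of_isOpenMap hgcont e.isOpenMap
  have hTm : IsMeagre (T₁ ∪ g ⁻¹' T₁) := by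
    rw [IsMeagre, Set.compl_union]
    exact Filter.inter_mem hT₁m hT₂m
  -- C is not contained in the error set
  have hCn : ¬ C ⊆ T₁ ∪ g ⁻¹' T₁ := by
    intro hsub
    have hCm : IsMeagre C := hTm.mono hsub
    have : Dense Cᶜ := dense_of_mem_residual hCm
    rcases (dense_iff_inter_open.mp this) C hCopen ⟨x₀, hCx₀⟩ with ⟨y, hy1, hy2⟩
    exact hy2 hy1
  obtain ⟨x, hxC, hxT⟩ := Set.not_subset.mp hCn
  simp only [Set.mem_union, not_or] at hxT
  obtain ⟨hx1, hx2⟩ := hxT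
  -- x ∈ S
  have hxS : x ∈ S := by
    have : (x ∈ S) = (x ∈ u) := not_not.mp (fun h => hx1 h)
    rw [this]
    exact hCu hxC
  -- g x ∈ C hence g x ∈ S
  have hgxC : g x ∈ C := by
    intro n hn
    have h1 : x n = x₀ n := hxC n hn
    simp only [hg]
    rw [if_pos (by simpa using hn)]
    exact h1
  have hgxS : g x ∈ S := by
    have : ¬ (g x ∈ T₁) := hx2
    have heq : (g x ∈ S) = (g x ∈ u) := not_not.mp (fun h => this h)
    rw [heq]
    exact hCu hgxC
  -- derive that univ ∈ K
  rw [hS, charFun_image] at hxS hgxS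
  have hI : (I : Set ℕ) ∈ K := hfin _ I.finite_toSet
  have hU : toSet x ∪ toSet (g x) ∪ (I : Set ℕ) ∈ K :=
    hun _ (hun _ hxS _ hgxS) _ hI
  apply hproper
  apply hdown _ _ _ hU
  intro n _
  by_cases hn : n ∈ I
  · exact Or.inr hn
  · by_cases hxn : x n = true
    · exact Or.inl (Or.inl hxn)
    · left; right
      show g x n = true
      simp [hg, hn, hxn]

end TalagrandAux

open TalagrandAux in
/-- Let `𝒥` be a Borel ideal on `ℕ` containing all finite sets, let
`D = ∏_n M_{k(n)}(ℂ)` with associated closed ideal `D^𝒥`, and let `ℒ` be a non-meager ideal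
on `ℕ`. If `a ∈ D \ D^𝒥` then there is `M ∈ ℒ` such that the restriction `P_M a` of `a` to
the coordinates in `M` is not in `D^𝒥`. -/
theorem exists_restriction_not_in_ideal (k : ℕ → ℕ) [∀ n, NeZero (k n)]
    (J : Set (Set ℕ))
    (hJdown : ∀ X Y : Set ℕ, X ⊆ Y → Y ∈ J → X ∈ J)
    (hJunion : ∀ X ∈ J, ∀ Y ∈ J, X ∪ Y ∈ J)
    (hJfin : ∀ X : Set ℕ, X.Finite → X ∈ J)
    (hJBorel : @MeasurableSet (ℕ → Bool) (borel (ℕ → Bool)) (charFun '' J))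
    (L : Set (Set ℕ))
    (hLdown : ∀ X Y : Set ℕ, X ⊆ Y → Y ∈ L → X ∈ L)
    (hLunion : ∀ X ∈ L, ∀ Y ∈ L, X ∪ Y ∈ L)
    (hLfin : ∀ X : Set ℕ, X.Finite → X ∈ L)
    (hLnonmeager : ¬ IsMeagre (charFun '' L))
    (a : lp (fun n => Matrix (Fin (k n)) (Fin (k n)) ℂ) ∞)
    (ha : ¬ ∀ ε : ℝ, 0 < ε → {n : ℕ | ε ≤ ‖a n‖} ∈ J) :
    ∃ M ∈ L, ∃ b : lp (fun n => Matrix (Fin (k n)) (Fin (k n)) ℂ) ∞,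
      (∀ n ∈ M, b n = a n) ∧ (∀ n ∉ M, b n = 0) ∧
      ¬ ∀ ε : ℝ, 0 < ε → {n : ℕ | ε ≤ ‖b n‖} ∈ J := by
  push_neg at ha
  obtain ⟨ε, hε, hA⟩ := ha
  set A : Set ℕ := {n : ℕ | ε ≤ ‖a n‖} with hAdef
  -- the trace ideal K
  set K : Set (Set ℕ) := {X | X ∩ A ∈ J} with hK
  have hKdown : ∀ X Y : Set ℕ, X ⊆ Y → Y ∈ K → X ∈ K := fun X Y hXY hY =>
    hJdown _ _ (Set.inter_subset_inter_left A hXY) hY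
  have hKun : ∀ X ∈ K, ∀ Y ∈ K, X ∪ Y ∈ K := by
    intro X hX Y hY
    show (X ∪ Y) ∩ A ∈ J
    rw [Set.union_inter_distrib_right]
    exact hJunion _ hX _ hY
  have hKfin : ∀ X : Set ℕ, X.Finite → X ∈ K := fun X hX =>
    hJfin _ (hX.inter_of_left A)
  have hKproper : (Set.univ : Set ℕ) ∉ K := by
    intro h
    apply hA
    simpa [hK] using h
  -- charFun '' K is Baire measurable
  letI : MeasurableSpace (ℕ → Bool) := borel _
  haveI : BorelSpace (ℕ → Bool) := ⟨rfl⟩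
  have hmap : Continuous (fun x : ℕ → Bool => fun n => x n && charFun A n) := by
    apply continuous_pi
    intro n
    exact Continuous.comp (continuous_of_discreteTopology
      (f := fun b : Bool => b && charFun A n)) (continuous_apply n)
  have himg : charFun '' K = (fun x : ℕ → Bool => fun n => x n && charFun A n) ⁻¹' (charFun '' J) := by
    rw [charFun_image, charFun_image]
    ext x
    have : toSet (fun n => x n && charFun A n) = toSet x ∩ A := by
      ext n
      simp [toSet, charFun, Set.mem_inter_iff]
    simp only [Set.mem_setOf_eq, Set.mem_preimage, this]
    rfl
  have hKBM : BaireMeasurableSet (charFun '' K) := by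
    rw [himg]
    exact (hmap.measurable hJBorel).baireMeasurableSet
  have hKmeagre : IsMeagre (charFun '' K) :=
    meagre_of_ideal K hKdown hKun hKfin hKproper hKBM
  -- find M ∈ L \ K
  have hM : ∃ M ∈ L, M ∉ K := by
    by_contra h
    push_neg at h
    exact hLnonmeager (hKmeagre.mono (Set.image_mono h))
  obtain ⟨M, hML, hMK⟩ := hM
  have hMA : M ∩ A ∉ J := hMK
  -- construct b
  set f : ∀ n, Matrix (Fin (k n)) (Fin (k n)) ℂ := fun n => if n ∈ M then a n else 0 with hf
  have hmem : Memℓp f ∞ := by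
    apply memℓp_infty
    refine ⟨‖a‖, ?_⟩
    rintro r ⟨n, rfl⟩
    simp only [hf]
    by_cases h : n ∈ M
    · rw [if_pos h]
      exact lp.norm_apply_le_norm ENNReal.top_ne_zero a n
    · rw [if_neg h, norm_zero]
      exact norm_nonneg _
  refine ⟨M, hML, ⟨f, hmem⟩, ?_, ?_, ?_⟩
  · intro n hn
    show f n = a n
    rw [hf]; exact if_pos hn
  · intro n hn
    show f n = 0
    rw [hf]; exact if_neg hn
  · intro h
    apply hMA
    refine hJdown _ _ ?_ (h ε hε)
    rintro n ⟨hnM, hnA⟩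
    show ε ≤ ‖f n‖
    rw [hf]
    simp only [if_pos hnM]
    exact hnA
end

section
/- A non-meager ideal ℒ on ℕ has the following property: for every partition (J_n) of ℕ into nonempty finite sets, there exists an infinite X ⊆ ℕ such that ⋃_{n∈X} J_n ∈ ℒ. -/
open scoped Classical

/-- one direction of Jalali-Naini–Talagrand. A non-meager ideal `ℒ` on `ℕ`
has the property that for every partition of `ℕ` into nonempty finite sets `(J_n)` there is an
infinite `X ⊆ ℕ` with `⋃_{n ∈ X} J_n ∈ ℒ`. -/
theorem nonmeager_ideal_partition_property
    (L : Set (Set ℕ))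
    (hdown : ∀ X Y : Set ℕ, X ⊆ Y → Y ∈ L → X ∈ L)
    (hunion : ∀ X ∈ L, ∀ Y ∈ L, X ∪ Y ∈ L)
    (hfin : ∀ X : Set ℕ, X.Finite → X ∈ L)
    (hnonmeager : ¬ IsMeagre (charFun '' L))
    (Jp : ℕ → Finset ℕ)
    (hne : ∀ n, (Jp n).Nonempty)
    (hdisj : ∀ m n, m ≠ n → Disjoint (Jp m) (Jp n))
    (hcover : (⋃ n, (Jp n : Set ℕ)) = Set.univ) :
    ∃ X : Set ℕ, X.Infinite ∧ (⋃ n ∈ X, (Jp n : Set ℕ)) ∈ L := by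
  by_contra hcon
  push_neg at hcon
  apply hnonmeager
  -- the sets E k
  set E : ℕ → Set (ℕ → Bool) := fun k => {f | ∀ n, k ≤ n → ∃ m ∈ Jp n, f m = false} with hE
  -- each E k is closed
  have hclosed : ∀ k, IsClosed (E k) := by
    intro k
    have : E k = ⋂ n ∈ {n | k ≤ n}, {f : ℕ → Bool | ∃ m ∈ Jp n, f m = false} := by
      ext f; simp [hE]
    rw [this]
    refine isClosed_biInter fun n _ => ?_
    have : {f : ℕ → Bool | ∃ m ∈ Jp n, f m = false} = ⋃ m ∈ Jp n, {f : ℕ → Bool | f m = false} := by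
      ext f; simp
    rw [this]
    refine (Jp n).finite_toSet.isClosed_biUnion fun m _ => ?_
    show IsClosed ((fun f : ℕ → Bool => f m) ⁻¹' {false})
    exact IsClosed.preimage (continuous_apply m) (isClosed_discrete ({false} : Set Bool))
  -- each E k is nowhere dense
  have hnd : ∀ k, IsNowhereDense (E k) := by
    intro k
    rw [(hclosed k).isNowhereDense_iff]
    by_contra hne'
    obtain ⟨f, hf⟩ := Set.nonempty_iff_ne_empty.mpr hne'
    obtain ⟨I, u, hIu, hsub⟩ := isOpen_pi_iff.mp isOpen_interior f hf
    -- choose n ≥ k with Jp n disjoint from I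
    have hbadfin : {n | ∃ i ∈ I, i ∈ Jp n}.Finite := by
      have : {n | ∃ i ∈ I, i ∈ Jp n} ⊆ ⋃ i ∈ I, {n | i ∈ Jp n} := by
        intro n hn; obtain ⟨i, hi, hin⟩ := hn
        exact Set.mem_biUnion hi hin
      refine Set.Finite.subset (I.finite_toSet.biUnion fun i _ => ?_) this
      refine Set.Subsingleton.finite fun a ha b hb => ?_
      by_contra hab
      exact Finset.disjoint_left.mp (hdisj a b hab) ha hb
    obtain ⟨n, hn⟩ := ((hbadfin.union (Set.finite_Iio k)).infinite_compl).nonempty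
    simp only [Set.mem_compl_iff, Set.mem_union, Set.mem_setOf_eq, Set.mem_Iio, not_or,
      not_exists, not_lt] at hn
    obtain ⟨hnI, hkn⟩ := hn
    push_neg at hnI
    set g : ℕ → Bool := fun m => if m ∈ Jp n then true else f m with hg
    have hgmem : g ∈ (I : Set ℕ).pi u := by
      intro i hi
      have : g i = f i := by
        simp only [hg]
        rw [if_neg (hnI i hi)]
      rw [this]
      exact (hIu i hi).2
    have := interior_subset (hsub hgmem)
    obtain ⟨m, hm, hgm⟩ := this n hkn
    simp [hg, hm] at hgm
  -- L is covered by the E k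
  have hcov : charFun '' L ⊆ ⋃ k, E k := by
    rintro _ ⟨A, hA, rfl⟩
    have hXfin : {n | (Jp n : Set ℕ) ⊆ A}.Finite := by
      by_contra hXinf
      exact hcon _ hXinf (hdown _ A (Set.iUnion₂_subset fun n hn => hn) hA)
    obtain ⟨k, hk⟩ := hXfin.bddAbove
    refine Set.mem_iUnion.mpr ⟨k + 1, fun n hkn => ?_⟩
    have hnX : ¬ (Jp n : Set ℕ) ⊆ A := fun h => by
      have := hk h
      omega
    obtain ⟨m, hm, hmA⟩ := Set.not_subset.mp hnX
    exact ⟨m, hm, by simp [charFun, hmA]⟩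
  refine IsMeagre.mono hcov ?_
  rw [← Set.sUnion_range]
  exact isMeagre_iff_countable_union_isNowhereDense.mpr
    ⟨Set.range E, fun t ⟨k, hk⟩ => hk ▸ hnd k, Set.countable_range E, subset_rfl⟩
end
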